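/- Let L be an N×N complex matrix with no eigenvalues on the imaginary axis. Then half the signature of L (defined as half the difference between the total algebraic multiplicity of eigenvalues with positive real part and those with negative real part) equals (1/2πi) ∫_{-∞}^{∞} ∂_s log det(L + i s·1) ds. -/

import Mathlib

open MeasureTheory Filter intervalIntegral

/-- Total algebraic multiplicity of eigenvalues of `L` with positive real part. -/
noncomputable def posEigMult {N : ℕ} (L : Matrix (Fin N) (Fin N) ℂ) : ℕ :=
  @Multiset.countP ℂ (fun z => 0 < z.re) (Classical.decPred _) (Matrix.charpoly L).roots

/-- Total algebraic multiplicity of eigenvalues of `L` with negative real part. -/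
noncomputable def negEigMult {N : ℕ} (L : Matrix (Fin N) (Fin N) ℂ) : ℕ :=
  @Multiset.countP ℂ (fun z => z.re < 0) (Classical.decPred _) (Matrix.charpoly L).roots


section Aux
open Polynomial Matrix
lemma eval_charpoly' {N : ℕ} (L : Matrix (Fin N) (Fin N) ℂ) (c : ℂ) :
    (Matrix.charpoly L).eval c = (c • (1 : Matrix (Fin N) (Fin N) ℂ) - L).det := by
  rw [Matrix.charpoly, ← Polynomial.coe_evalRingHom, RingHom.map_det]
  congr 1
  ext i j
  by_cases h : i = j
  · subst h; simp [charmatrix_apply, Matrix.one_apply, Matrix.smul_apply]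
  · simp [charmatrix_apply, Matrix.one_apply, h, Matrix.smul_apply, Matrix.diagonal_apply_ne _ h]

lemma det_add_smul_one {N : ℕ} (L : Matrix (Fin N) (Fin N) ℂ) (c : ℂ) :
    (L + c • (1 : Matrix (Fin N) (Fin N) ℂ)).det
      = ((Matrix.charpoly L).roots.map (fun z => z + c)).prod := by
  have hm : (Matrix.charpoly L).Monic := Matrix.charpoly_monic L
  have hs : (Matrix.charpoly L).Splits := IsAlgClosed.splits _
  have hcard : Multiset.card (Matrix.charpoly L).roots = N := by
    rw [(Polynomial.splits_iff_card_roots).mp hs, Matrix.charpoly_natDegree_eq_dim,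
      Fintype.card_fin]
  have h1 := hs.eq_prod_roots_of_monic hm
  have h2 : (Matrix.charpoly L).eval (-c) = (-1 : ℂ) ^ N * (L + c • 1).det := by
    rw [eval_charpoly' L (-c)]
    rw [show (-c) • (1 : Matrix (Fin N) (Fin N) ℂ) - L = -(L + c • 1) by module]
    rw [Matrix.det_neg, Fintype.card_fin]
  have h3 : (Matrix.charpoly L).eval (-c)
      = (-1 : ℂ) ^ N * ((Matrix.charpoly L).roots.map (fun z => z + c)).prod := by
    conv_lhs => rw [h1]
    rw [Polynomial.eval_multiset_prod, Multiset.map_map]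
    rw [show ((fun p => Polynomial.eval (-c) p) ∘ fun a => Polynomial.X - Polynomial.C a)
        = fun a => (-1 : ℂ) * (a + c) by ext a; simp; ring]
    rw [show (fun a : ℂ => (-1 : ℂ) * (a + c)) = (fun x => (-1 : ℂ) * x) ∘ (fun a => a + c)
      from rfl]
    rw [← Multiset.map_map (fun x => (-1 : ℂ) * x) (fun a => a + c), Multiset.prod_map_mul]
    simp [hcard]
  have hne : ((-1 : ℂ) ^ N) ≠ 0 := by
    simp [pow_ne_zero]
  exact mul_left_cancel₀ hne (h2.symm.trans h3)

open Complex in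
lemma factor_ne_zero {z : ℂ} (hz : z.re ≠ 0) (s : ℝ) : z + (s : ℂ) * Complex.I ≠ 0 := by
  intro h
  apply hz
  have := congrArg Complex.re h
  simpa using this

open Complex in
lemma hasDerivAt_tI (s : ℝ) : HasDerivAt (fun t : ℝ => (t : ℂ) * Complex.I) Complex.I s := by
  simpa using (Complex.ofRealCLM.hasDerivAt (x := s)).mul_const Complex.I

open Complex in
lemma hasDerivAt_prodfn (μ : Multiset ℂ) (hμ : ∀ z ∈ μ, z.re ≠ 0) (s : ℝ) :
    HasDerivAt (fun t : ℝ => (μ.map (fun z => z + (t:ℂ)*Complex.I)).prod)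
      ((μ.map (fun z => z + (s:ℂ)*Complex.I)).prod *
        (μ.map (fun z => Complex.I/(z + (s:ℂ)*Complex.I))).sum) s := by
  induction μ using Multiset.induction_on with
  | empty => simpa using hasDerivAt_const s (1 : ℂ)
  | cons a μ ih =>
    have ha : a.re ≠ 0 := hμ a (Multiset.mem_cons_self a μ)
    have hμ' : ∀ z ∈ μ, z.re ≠ 0 := fun z hz => hμ z (Multiset.mem_cons_of_mem hz)
    have h1 : HasDerivAt (fun t : ℝ => a + (t:ℂ)*Complex.I) Complex.I s :=
      (hasDerivAt_tI s).const_add a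
    have h2 := ih hμ'
    have := h1.mul h2
    simp only [Multiset.map_cons, Multiset.prod_cons, Multiset.sum_cons]
    refine this.congr_deriv ?_
    have hane : a + (s:ℂ)*Complex.I ≠ 0 := factor_ne_zero ha s
    have hq : Complex.I / (a + (s:ℂ)*Complex.I) * (a + (s:ℂ)*Complex.I) = Complex.I := div_mul_cancel₀ _ hane
    linear_combination (-(μ.map (fun z => z + (s:ℂ)*Complex.I)).prod) * hq

lemma prodfn_ne_zero (μ : Multiset ℂ) (hμ : ∀ z ∈ μ, z.re ≠ 0) (s : ℝ) :
    (μ.map (fun z => z + (s:ℂ)*Complex.I)).prod ≠ 0 := by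
  apply Multiset.prod_ne_zero
  simp only [Multiset.mem_map]
  rintro ⟨z, hz, h0⟩
  exact factor_ne_zero (hμ z hz) s h0

/-- Antiderivative of `s ↦ I / (z + s I)`. -/
noncomputable def Fa (z : ℂ) (s : ℝ) : ℂ :=
  ((Real.log (z.re^2 + (z.im+s)^2))/2 : ℝ) + (Real.arctan ((z.im+s)/z.re) : ℝ) * Complex.I

lemma denom_pos {a : ℝ} (ha : a ≠ 0) (x : ℝ) : 0 < a^2 + x^2 := by positivity

lemma hasDerivAt_Fa {z : ℂ} (hz : z.re ≠ 0) (s : ℝ) :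
    HasDerivAt (Fa z) (Complex.I / (z + (s:ℂ)*Complex.I)) s := by
  set a := z.re with ha
  set b := z.im with hb
  have hd : 0 < a^2 + (b+s)^2 := denom_pos hz (b+s)
  have h1 : HasDerivAt (fun t : ℝ => (Real.log (a^2 + (b+t)^2))/2)
      ((b+s)/(a^2+(b+s)^2)) s := by
    have hin : HasDerivAt (fun t : ℝ => a^2 + (b+t)^2) (2*(b+s)) s := by
      have : HasDerivAt (fun t : ℝ => b + t) 1 s := (hasDerivAt_id s).const_add b
      simpa [mul_comm] using ((this.pow 2).const_add (a^2))
    have := (Real.hasDerivAt_log (ne_of_gt hd)).comp s hin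
    refine (this.div_const 2).congr_deriv ?_
    field_simp
  have h2 : HasDerivAt (fun t : ℝ => Real.arctan ((b+t)/a)) (a/(a^2+(b+s)^2)) s := by
    have hin : HasDerivAt (fun t : ℝ => (b+t)/a) (1/a) s := by
      simpa [div_eq_mul_inv] using ((hasDerivAt_id s).const_add b).div_const a
    have := (Real.hasDerivAt_arctan ((b+s)/a)).comp s hin
    refine this.congr_deriv ?_
    field_simp
  have h3 : HasDerivAt (fun t : ℝ => ((Real.log (a^2 + (b+t)^2))/2 : ℝ) : ℝ → ℂ)
      (((b+s)/(a^2+(b+s)^2) : ℝ) : ℂ) s :=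
    h1.ofReal_comp
  have h4 : HasDerivAt (fun t : ℝ => (Real.arctan ((b+t)/a) : ℂ) * Complex.I)
      (((a/(a^2+(b+s)^2) : ℝ) : ℂ) * Complex.I) s :=
    h2.ofReal_comp.mul_const Complex.I
  have := h3.add h4
  refine this.congr_deriv ?_
  symm
  have hzs : z + (s:ℂ)*Complex.I ≠ 0 := factor_ne_zero hz s
  have hre : z + (s:ℂ)*Complex.I = (a : ℂ) + ((b+s : ℝ) : ℂ) * Complex.I := by
    rw [← Complex.re_add_im z]
    push_cast
    ring
  have hDne : ((a^2 + (b+s)^2 : ℝ) : ℂ) ≠ 0 := by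
    exact_mod_cast ne_of_gt hd
  rw [hre]
  rw [show (((b + s) / (a ^ 2 + (b + s) ^ 2) : ℝ) : ℂ) + ((a / (a ^ 2 + (b + s) ^ 2) : ℝ) : ℂ) * Complex.I
      = (((b+s:ℝ):ℂ) + (a:ℂ)*Complex.I) / ((a^2 + (b+s)^2 : ℝ) : ℂ) by push_cast; field_simp]
  rw [div_eq_div_iff (hre ▸ hzs) hDne]
  push_cast
  linear_combination (-((a:ℂ)*((b:ℂ)+(s:ℂ)))) * Complex.I_sq

open Filter Topology in
lemma tendsto_ratio (a b : ℝ) (ha : a ≠ 0) :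
    Tendsto (fun R : ℝ => (a^2+(b+R)^2)/(a^2+(b-R)^2)) atTop (𝓝 1) := by
  have hφ : ContinuousAt (fun ε : ℝ => ((a*ε)^2+(b*ε+1)^2)/((a*ε)^2+(b*ε-1)^2)) 0 := by
    apply ContinuousAt.div
    · fun_prop
    · fun_prop
    · norm_num
  have h0 : Tendsto (fun R : ℝ => R⁻¹) atTop (𝓝 0) := tendsto_inv_atTop_zero
  have := hφ.tendsto.comp h0
  simp only [mul_zero, zero_add, zero_sub] at this
  norm_num at this
  apply this.congr'
  filter_upwards [eventually_ge_atTop (1:ℝ)] with R hR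
  have hRne : R ≠ 0 := by linarith
  have hd1 : a^2 + (b - R)^2 ≠ 0 := ne_of_gt (denom_pos ha (b-R))
  have hd2 : (a*R⁻¹)^2 + (b*R⁻¹-1)^2 ≠ 0 := by
    have : (a*R⁻¹)^2 + (b*R⁻¹-1)^2 = (a^2 + (b-R)^2)/R^2 := by
      field_simp
      try ring
    rw [this]
    positivity
  simp only [Function.comp]
  rw [div_eq_div_iff hd2 hd1]
  field_simp
  try ring

open Filter Topology in
lemma tendsto_Fa {z : ℂ} (hz : z.re ≠ 0) :
    Tendsto (fun R : ℝ => Fa z R - Fa z (-R)) atTop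
      (𝓝 (if 0 < z.re then (Real.pi : ℂ) * Complex.I else -((Real.pi : ℂ) * Complex.I))) := by
  set a := z.re
  set b := z.im
  have hu : Tendsto (fun R : ℝ =>
      (Real.log (a^2+(b+R)^2) / 2 - Real.log (a^2+(b+(-R))^2) / 2)) atTop (𝓝 0) := by
    have h1 : Tendsto (fun R : ℝ => Real.log ((a^2+(b+R)^2)/(a^2+(b-R)^2)) / 2)
        atTop (𝓝 0) := by
      have := ((Real.continuousAt_log one_ne_zero).tendsto.comp (tendsto_ratio a b hz)).div_const 2
      simpa using this
    apply h1.congr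
    intro R
    rw [Real.log_div (ne_of_gt (denom_pos hz (b+R))) (ne_of_gt (denom_pos hz (b-R)))]
    ring_nf
  have hv : Tendsto (fun R : ℝ =>
      (Real.arctan ((b+R)/a) - Real.arctan ((b+(-R))/a))) atTop
      (𝓝 (if 0 < a then Real.pi else -Real.pi)) := by
    rcases lt_or_gt_of_ne hz with hneg | hpos
    · -- a < 0
      have h1 : Tendsto (fun R : ℝ => (b+R)/a) atTop atBot := by
        have h2 : Tendsto (fun R : ℝ => -((b+R)/(-a))) atTop atBot := by
          apply Filter.tendsto_neg_atTop_atBot.comp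
          exact Tendsto.atTop_div_const (by linarith) (tendsto_atTop_add_const_left _ b tendsto_id)
        apply h2.congr
        intro R
        rw [div_neg, neg_neg]
      have h2 : Tendsto (fun R : ℝ => (b+(-R))/a) atTop atTop := by
        have h3 : Tendsto (fun R : ℝ => (R - b)/(-a)) atTop atTop :=
          Tendsto.atTop_div_const (by linarith) (tendsto_atTop_add_const_right _ (-b) tendsto_id)
        apply h3.congr
        intro R
        rw [div_neg, ← neg_div]
        ring_nf
      have ha1 := (Real.tendsto_arctan_atBot.mono_right nhdsWithin_le_nhds).comp h1
      have ha2 := (Real.tendsto_arctan_atTop.mono_right nhdsWithin_le_nhds).comp h2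
      have := ha1.sub ha2
      rw [if_neg (by linarith)]
      convert this using 1
      · rfl
      ring
    · -- a > 0
      have h1 : Tendsto (fun R : ℝ => (b+R)/a) atTop atTop :=
        Tendsto.atTop_div_const hpos (tendsto_atTop_add_const_left _ b tendsto_id)
      have h2 : Tendsto (fun R : ℝ => (b+(-R))/a) atTop atBot := by
        have h3 : Tendsto (fun R : ℝ => -((R - b)/a)) atTop atBot := by
          apply Filter.tendsto_neg_atTop_atBot.comp
          exact Tendsto.atTop_div_const hpos (tendsto_atTop_add_const_right _ (-b) tendsto_id)
        apply h3.congr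
        intro R
        rw [← neg_div]
        ring_nf
      have ha1 := (Real.tendsto_arctan_atTop.mono_right nhdsWithin_le_nhds).comp h1
      have ha2 := (Real.tendsto_arctan_atBot.mono_right nhdsWithin_le_nhds).comp h2
      have := ha1.sub ha2
      rw [if_pos hpos]
      convert this using 1
      · rfl
      ring
  have hcu := (Complex.continuous_ofReal.tendsto _).comp hu
  have hcv := ((Complex.continuous_ofReal.tendsto _).comp hv).mul_const Complex.I
  have := hcu.add hcv
  simp only [Function.comp] at this
  convert this using 2 with R
  · unfold Fa
    push_cast
    ring
  · split_ifs <;> simp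

open Filter Topology in
/-- Sum of antiderivatives has derivative the sum integrand. -/
lemma hasDerivAt_G (μ : Multiset ℂ) (hμ : ∀ z ∈ μ, z.re ≠ 0) (s : ℝ) :
    HasDerivAt (fun t : ℝ => (μ.map (fun z => Fa z t)).sum)
      ((μ.map (fun z => Complex.I / (z + (s:ℂ)*Complex.I))).sum) s := by
  induction μ using Multiset.induction_on with
  | empty => simpa using hasDerivAt_const s (0 : ℂ)
  | cons a μ ih =>
    have ha : a.re ≠ 0 := hμ a (Multiset.mem_cons_self a μ)
    have h := (hasDerivAt_Fa ha s).add (ih (fun z hz => hμ z (Multiset.mem_cons_of_mem hz)))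
    simp only [Multiset.map_cons, Multiset.sum_cons]
    exact h

lemma continuous_g (μ : Multiset ℂ) (hμ : ∀ z ∈ μ, z.re ≠ 0) :
    Continuous (fun s : ℝ => (μ.map (fun z => Complex.I / (z + (s:ℂ)*Complex.I))).sum) := by
  induction μ using Multiset.induction_on with
  | empty => simpa using continuous_const
  | cons a μ ih =>
    have ha : a.re ≠ 0 := hμ a (Multiset.mem_cons_self a μ)
    have h1 : Continuous (fun s : ℝ => Complex.I / (a + (s:ℂ)*Complex.I)) := by
      apply Continuous.div continuous_const
      · fun_prop
      · intro s
        exact factor_ne_zero ha s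
    have := h1.add (ih (fun z hz => hμ z (Multiset.mem_cons_of_mem hz)))
    simp only [Multiset.map_cons, Multiset.sum_cons]
    exact this

open Filter Topology in
lemma tendsto_G (μ : Multiset ℂ) (hμ : ∀ z ∈ μ, z.re ≠ 0) :
    Tendsto (fun R : ℝ => (μ.map (fun z => Fa z R)).sum - (μ.map (fun z => Fa z (-R))).sum)
      atTop (𝓝 ((μ.map (fun z => if 0 < z.re then (Real.pi : ℂ) * Complex.I
        else -((Real.pi : ℂ) * Complex.I))).sum)) := by
  induction μ using Multiset.induction_on with
  | empty => simpa using tendsto_const_nhds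
  | cons a μ ih =>
    have ha : a.re ≠ 0 := hμ a (Multiset.mem_cons_self a μ)
    have h := (tendsto_Fa ha).add (ih (fun z hz => hμ z (Multiset.mem_cons_of_mem hz)))
    simp only [Multiset.map_cons, Multiset.sum_cons]
    convert h using 2 with R
    ring

lemma sum_signs (μ : Multiset ℂ) (hμ : ∀ z ∈ μ, z.re ≠ 0) :
    (μ.map (fun z => if 0 < z.re then (Real.pi : ℂ) * Complex.I
        else -((Real.pi : ℂ) * Complex.I))).sum
      = (Real.pi : ℂ) * Complex.I *
        (((@Multiset.countP ℂ (fun z => 0 < z.re) (Classical.decPred _) μ : ℤ)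
          - (@Multiset.countP ℂ (fun z => z.re < 0) (Classical.decPred _) μ : ℤ) : ℤ) : ℂ) := by
  induction μ using Multiset.induction_on with
  | empty => simp
  | cons a μ ih =>
    have ha : a.re ≠ 0 := hμ a (Multiset.mem_cons_self a μ)
    have ih' := ih (fun z hz => hμ z (Multiset.mem_cons_of_mem hz))
    simp only [Multiset.map_cons, Multiset.sum_cons, Multiset.countP_cons, ih']
    rcases lt_or_gt_of_ne ha with hneg | hpos
    · rw [if_neg (by linarith), if_pos hneg, if_neg (by linarith)]
      push_cast
      ring
    · rw [if_pos hpos, if_pos hpos, if_neg (by linarith)]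
      push_cast
      ring

lemma log_ofReal_of_neg {x : ℝ} (hx : x < 0) :
    Complex.log (x : ℂ) = (Real.log (-x) : ℂ) + (Real.pi : ℂ) * Complex.I := by
  apply Complex.ext
  · simp [Complex.log_re, abs_of_neg hx]
  · simp [Complex.log_im, Complex.arg_ofReal_of_neg hx]

open Complex in
/-- In the everywhere-real-negative case, the derivative of the log still equals `g`. -/
lemma deriv_log_eq_of_neg (μ : Multiset ℂ) (hμ : ∀ z ∈ μ, z.re ≠ 0)
    (him : ∀ t : ℝ, ((μ.map (fun z => z + (t:ℂ)*Complex.I)).prod).im = 0)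
    (hneg : ∀ t : ℝ, ((μ.map (fun z => z + (t:ℂ)*Complex.I)).prod).re < 0) (s : ℝ) :
    deriv (fun t : ℝ => Complex.log ((μ.map (fun z => z + (t:ℂ)*Complex.I)).prod)) s
      = (μ.map (fun z => Complex.I / (z + (s:ℂ)*Complex.I))).sum := by
  set f : ℝ → ℂ := fun t => (μ.map (fun z => z + (t:ℂ)*Complex.I)).prod with hf
  set g : ℝ → ℂ := fun s => (μ.map (fun z => Complex.I / (z + (s:ℂ)*Complex.I))).sum with hg
  set u : ℝ → ℝ := fun t => (f t).re with hu
  have hfu : ∀ t, f t = ((u t : ℝ) : ℂ) := by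
    intro t
    apply Complex.ext
    · rfl
    · simpa using him t
  have hfd : HasDerivAt f (f s * g s) s := hasDerivAt_prodfn μ hμ s
  have hud : HasDerivAt u ((f s * g s).re) s :=
    (Complex.reCLM.hasFDerivAt.comp_hasDerivAt s hfd)
  have hfd2 : HasDerivAt f (((f s * g s).re : ℝ) : ℂ) s := by
    have := hud.ofReal_comp
    apply this.congr_of_eventuallyEq
    filter_upwards with t
    rw [hfu t]
  have hder_eq : ((( f s * g s).re : ℝ) : ℂ) = f s * g s := hfd2.unique hfd
  -- the log composite
  have hlog : (fun t : ℝ => Complex.log (f t))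
      = fun t => ((Real.log (-(u t)) : ℝ) : ℂ) + (Real.pi : ℂ) * Complex.I := by
    funext t
    rw [hfu t, log_ofReal_of_neg (hneg t)]
  have husneg : u s < 0 := hneg s
  have hrd : HasDerivAt (fun t : ℝ => Real.log (-(u t)))
      ((-(f s * g s).re) / (-(u s))) s := by
    have h1 : HasDerivAt (fun t : ℝ => -(u t)) (-(f s * g s).re) s := hud.neg
    have := (Real.hasDerivAt_log (by linarith : -(u s) ≠ 0)).comp s h1
    refine this.congr_deriv ?_
    field_simp
  have hld : HasDerivAt (fun t : ℝ => Complex.log (f t))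
      ((((-(f s * g s).re) / (-(u s)) : ℝ) : ℂ)) s := by
    rw [hlog]
    exact hrd.ofReal_comp.add_const _
  rw [hld.deriv]
  have hfs : f s ≠ 0 := prodfn_ne_zero μ hμ s
  have hus : ((u s : ℝ) : ℂ) ≠ 0 := by rw [← hfu s]; exact hfs
  push_cast
  rw [neg_div_neg_eq, hder_eq]
  rw [hfu s]
  field_simp
  simp [g, mul_comm]

open Complex in
lemma deriv_log_eq_of_slit (μ : Multiset ℂ) (hμ : ∀ z ∈ μ, z.re ≠ 0) (s : ℝ)
    (hs : (μ.map (fun z => z + (s:ℂ)*Complex.I)).prod ∈ Complex.slitPlane) :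
    deriv (fun t : ℝ => Complex.log ((μ.map (fun z => z + (t:ℂ)*Complex.I)).prod)) s
      = (μ.map (fun z => Complex.I / (z + (s:ℂ)*Complex.I))).sum := by
  have h := (hasDerivAt_prodfn μ hμ s).clog_real hs
  rw [h.deriv]
  exact mul_div_cancel_left₀ _ (prodfn_ne_zero μ hμ s)

open Complex MeasureTheory in
lemma ae_deriv_log (μ : Multiset ℂ) (hμ : ∀ z ∈ μ, z.re ≠ 0) :
    ∀ᵐ s : ℝ,
      deriv (fun t : ℝ => Complex.log ((μ.map (fun z => z + (t:ℂ)*Complex.I)).prod)) s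
        = (μ.map (fun z => Complex.I / (z + (s:ℂ)*Complex.I))).sum := by
  set f : ℝ → ℂ := fun t => (μ.map (fun z => z + (t:ℂ)*Complex.I)).prod with hf
  set P : Polynomial ℂ :=
    (μ.map (fun z => Polynomial.C z + Polynomial.X * Polynomial.C Complex.I)).prod with hP
  set Q : Polynomial ℂ :=
    (μ.map (fun z => Polynomial.C ((starRingEnd ℂ) z) - Polynomial.X * Polynomial.C Complex.I)).prod
    with hQ
  have hevalP : ∀ t : ℝ, P.eval (t : ℂ) = f t := by
    intro t
    rw [hP, Polynomial.eval_multiset_prod, Multiset.map_map]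
    congr 1
    apply Multiset.map_congr rfl
    intro z _
    simp [mul_comm Complex.I]
  have hevalQ : ∀ t : ℝ, Q.eval (t : ℂ) = (starRingEnd ℂ) (f t) := by
    intro t
    rw [hQ, Polynomial.eval_multiset_prod, Multiset.map_map, hf, map_multiset_prod,
      Multiset.map_map]
    congr 1
    apply Multiset.map_congr rfl
    intro z _
    simp [Complex.conj_ofReal, sub_eq_add_neg, mul_comm Complex.I]
  by_cases hPQ : P = Q
  · -- f is real-valued everywhere
    have him : ∀ t : ℝ, (f t).im = 0 := by
      intro t
      have : (starRingEnd ℂ) (f t) = f t := by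
        rw [← hevalQ t, ← hPQ, hevalP t]
      exact (Complex.conj_eq_iff_im).mp this
    have hcont : Continuous fun t : ℝ => (f t).re := by
      apply Complex.continuous_re.comp
      rw [continuous_iff_continuousAt]
      intro s
      exact (hasDerivAt_prodfn μ hμ s).continuousAt
    have hne : ∀ t : ℝ, (f t).re ≠ 0 := by
      intro t h0
      apply prodfn_ne_zero μ hμ t
      apply Complex.ext
      · simpa using h0
      · simpa using him t
    have hsign : (∀ s : ℝ, 0 < (f s).re) ∨ (∀ s : ℝ, (f s).re < 0) := by
      rcases lt_or_gt_of_ne (hne 0) with h0 | h0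
      · right
        intro s
        by_contra hc
        push_neg at hc
        have hcs : 0 < (f s).re := lt_of_le_of_ne hc (Ne.symm (hne s))
        have : (0:ℝ) ∈ Set.uIcc ((f 0).re) ((f s).re) :=
          Set.mem_uIcc.mpr (Or.inl ⟨le_of_lt h0, le_of_lt hcs⟩)
        obtain ⟨t, _, ht⟩ := intermediate_value_uIcc (hcont.continuousOn) this
        exact hne t ht
      · left
        intro s
        by_contra hc
        push_neg at hc
        have hcs : (f s).re < 0 := lt_of_le_of_ne hc (hne s)
        have : (0:ℝ) ∈ Set.uIcc ((f 0).re) ((f s).re) :=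
          Set.mem_uIcc.mpr (Or.inr ⟨le_of_lt hcs, le_of_lt h0⟩)
        obtain ⟨t, _, ht⟩ := intermediate_value_uIcc (hcont.continuousOn) this
        exact hne t ht
    rcases hsign with hpos | hneg
    · filter_upwards with s
      exact deriv_log_eq_of_slit μ hμ s (Or.inl (hpos s))
    · filter_upwards with s
      exact deriv_log_eq_of_neg μ hμ him hneg s
  · -- bad set is finite
    have hD : P - Q ≠ 0 := sub_ne_zero.mpr hPQ
    have hfin : {x : ℂ | (P - Q).IsRoot x}.Finite := Polynomial.finite_setOf_isRoot hD
    have hSsub : {s : ℝ | (f s).im = 0} ⊆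
        (fun s : ℝ => (s : ℂ)) ⁻¹' {x : ℂ | (P - Q).IsRoot x} := by
      intro s hs
      simp only [Set.mem_preimage, Set.mem_setOf_eq, Polynomial.IsRoot, Polynomial.eval_sub]
      rw [hevalP s, hevalQ s]
      rw [Complex.conj_eq_iff_im.mpr hs]
      ring
    have hSfin : {s : ℝ | (f s).im = 0}.Finite := by
      apply Set.Finite.subset _ hSsub
      apply Set.Finite.preimage _ hfin
      exact Complex.ofReal_injective.injOn
    have hS0 : volume {s : ℝ | (f s).im = 0} = 0 := hSfin.countable.measure_zero _
    rw [MeasureTheory.ae_iff]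
    apply measure_mono_null _ hS0
    intro s hs
    simp only [Set.mem_setOf_eq] at hs ⊢
    by_contra him
    exact hs (deriv_log_eq_of_slit μ hμ s (Or.inr him))

open MeasureTheory Filter intervalIntegral in
theorem half_signature_eq_log_det_integral' {N : ℕ} (L : Matrix (Fin N) (Fin N) ℂ)
    (hgap : ∀ z ∈ (Matrix.charpoly L).roots, z.re ≠ 0) :
    Tendsto (fun R : ℝ =>
        (1 / (2 * (Real.pi : ℂ) * Complex.I)) *
          ∫ s in (-R)..R,
            deriv (fun t : ℝ => Complex.log ((L + ((t : ℂ) * Complex.I) • 1).det)) s)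
      atTop
      (nhds ((((@Multiset.countP ℂ (fun z => 0 < z.re) (Classical.decPred _) (Matrix.charpoly L).roots : ℤ)
        - (@Multiset.countP ℂ (fun z => z.re < 0) (Classical.decPred _) (Matrix.charpoly L).roots : ℤ) : ℤ) : ℂ) / 2)) := by
  set μ := (Matrix.charpoly L).roots with hμdef
  have hμ : ∀ z ∈ μ, z.re ≠ 0 := hgap
  set G : ℝ → ℂ := fun t => (μ.map (fun z => Fa z t)).sum with hG
  have key : ∀ R : ℝ,
      (∫ s in (-R)..R,
        deriv (fun t : ℝ => Complex.log ((L + ((t:ℂ)*Complex.I) • 1).det)) s)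
      = G R - G (-R) := by
    intro R
    have h1 : (fun t : ℝ => Complex.log ((L + ((t:ℂ)*Complex.I) • 1).det))
        = fun t : ℝ => Complex.log ((μ.map (fun z => z + (t:ℂ)*Complex.I)).prod) := by
      funext t
      rw [det_add_smul_one]
    rw [h1]
    have h2 : (∫ s in (-R)..R,
          deriv (fun t : ℝ =>
            Complex.log ((μ.map (fun z => z + (t:ℂ)*Complex.I)).prod)) s)
        = ∫ s in (-R)..R, (μ.map (fun z => Complex.I/(z + (s:ℂ)*Complex.I))).sum := by
      apply intervalIntegral.integral_congr_ae
      filter_upwards [ae_deriv_log μ hμ] with s hs _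
      exact hs
    rw [h2]
    exact intervalIntegral.integral_eq_sub_of_hasDerivAt
      (fun t _ => hasDerivAt_G μ hμ t) ((continuous_g μ hμ).intervalIntegrable _ _)
  have hlim := tendsto_G μ hμ
  rw [sum_signs μ hμ] at hlim
  have hlim2 := hlim.const_mul (1 / (2 * (Real.pi:ℂ) * Complex.I))
  set d : ℤ := (@Multiset.countP ℂ (fun z => 0 < z.re) (Classical.decPred _) μ : ℤ)
    - (@Multiset.countP ℂ (fun z => z.re < 0) (Classical.decPred _) μ : ℤ) with hd
  have hπ : ((Real.pi : ℂ)) ≠ 0 := Complex.ofReal_ne_zero.mpr Real.pi_ne_zero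
  have hval : (1 / (2 * (Real.pi:ℂ) * Complex.I)) * ((Real.pi:ℂ) * Complex.I * (d:ℂ))
      = (d:ℂ)/2 := by
    field_simp [Complex.I_ne_zero]
  rw [hval] at hlim2
  apply hlim2.congr
  intro R
  rw [key R]

end Aux

/-- For an `N×N` complex matrix `L` with no eigenvalues on the imaginary
axis, half the signature `Sig(L) = N₊ − N₋` equals
`(1/2πi) ∫_{-∞}^{∞} ∂ₛ log det(L + i s 1) ds` (as a principal value / symmetric
improper integral). -/
theorem half_signature_eq_log_det_integral {N : ℕ} (L : Matrix (Fin N) (Fin N) ℂ)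
    (hgap : ∀ z ∈ (Matrix.charpoly L).roots, z.re ≠ 0) :
    Tendsto (fun R : ℝ =>
        (1 / (2 * (Real.pi : ℂ) * Complex.I)) *
          ∫ s in (-R)..R,
            deriv (fun t : ℝ => Complex.log ((L + ((t : ℂ) * Complex.I) • 1).det)) s)
      atTop
      (nhds ((((posEigMult L : ℤ) - (negEigMult L : ℤ) : ℤ) : ℂ) / 2)) := by
  unfold posEigMult negEigMult
  exact half_signature_eq_log_det_integral' L hgap
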